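/- Let κ > 0 and let d ≥ 0 be an integer. Set x₀ = ((d + 4/3)/κ)^κ. Then for all x > 0, Σ_{m ≥ 1} m^d · x^m · m^{−κm} ≤ 6 · (max(x, x₀))^{(d+1)/κ} · exp(κ · (max(x, x₀))^{1/κ}). -/

import Mathlib

/- STATEMENT 14: For κ > 0, d ≥ 0 and x > 0, with x₀ = ((d + 4/3)/κ)^κ,
   Σ_{m ≥ 1} m^d x^m m^{−κm} ≤ 6 (max x x₀)^{(d+1)/κ} exp(κ (max x x₀)^{1/κ}). -/


lemma key14 (d : ℕ) : (2:ℝ)^(d+1) * (d.factorial : ℝ) ≤ 6 * ((d:ℝ) + 4/3)^(d+1) := by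
  induction d with
  | zero => norm_num
  | succ d ih =>
    have hd : (0:ℝ) ≤ (d:ℝ) := Nat.cast_nonneg d
    have hb : (0:ℝ) < (d:ℝ) + 4/3 := by linarith
    have hxpos : (0:ℝ) ≤ 1/((d:ℝ)+4/3) := by positivity
    have bern := one_add_mul_le_pow (by linarith : (-2:ℝ) ≤ 1/((d:ℝ)+4/3)) (d+1)
    have hP : (0:ℝ) < ((d:ℝ)+4/3)^(d+1) := by positivity
    have e2 : ((d:ℝ)+7/3)^(d+1) = ((d:ℝ)+4/3)^(d+1) * (1+1/((d:ℝ)+4/3))^(d+1) := by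
      rw [← mul_pow]; congr 1; field_simp; ring
    have h3 : ((d:ℝ)+4/3)^(d+1) * (1 + ((d:ℝ)+1)/((d:ℝ)+4/3)) ≤ ((d:ℝ)+7/3)^(d+1) := by
      rw [e2]
      refine mul_le_mul_of_nonneg_left ?_ hP.le
      refine le_trans (le_of_eq ?_) bern
      push_cast
      ring
    have h4 : 2*((d:ℝ)+1) ≤ ((d:ℝ)+7/3) * (1 + ((d:ℝ)+1)/((d:ℝ)+4/3)) := by
      have heq : ((d:ℝ)+7/3) * (1 + ((d:ℝ)+1)/((d:ℝ)+4/3)) - 2*((d:ℝ)+1)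
          = ((7/3)*(d:ℝ) + 25/9)/((d:ℝ)+4/3) := by field_simp; ring
      have hnn : (0:ℝ) ≤ ((7/3)*(d:ℝ) + 25/9)/((d:ℝ)+4/3) := by positivity
      linarith
    have hfac : (0:ℝ) ≤ (1 + ((d:ℝ)+1)/((d:ℝ)+4/3)) := by positivity
    calc (2:ℝ)^(d+1+1) * ((d+1).factorial : ℝ)
        = 2*((d:ℝ)+1) * ((2:ℝ)^(d+1) * (d.factorial : ℝ)) := by
          push_cast [Nat.factorial_succ]; ring
      _ ≤ 2*((d:ℝ)+1) * (6 * ((d:ℝ)+4/3)^(d+1)) := by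
          refine mul_le_mul_of_nonneg_left ih (by positivity)
      _ = (2*((d:ℝ)+1)) * 6 * ((d:ℝ)+4/3)^(d+1) := by ring
      _ ≤ (((d:ℝ)+7/3) * (1 + ((d:ℝ)+1)/((d:ℝ)+4/3))) * 6 * ((d:ℝ)+4/3)^(d+1) := by
          refine mul_le_mul_of_nonneg_right (mul_le_mul_of_nonneg_right h4 (by norm_num)) hP.le
      _ = 6 * (((d:ℝ)+7/3) * (((d:ℝ)+4/3)^(d+1) * (1 + ((d:ℝ)+1)/((d:ℝ)+4/3)))) := by ring
      _ ≤ 6 * (((d:ℝ)+7/3) * ((d:ℝ)+7/3)^(d+1)) := by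
          refine mul_le_mul_of_nonneg_left (mul_le_mul_of_nonneg_left h3 (by linarith)) (by norm_num)
      _ = 6 * ((↑(d+1):ℝ) + 4/3)^(d+1+1) := by push_cast; ring

theorem stmt14 (κ : ℝ) (hκ : 0 < κ) (d : ℕ) (x : ℝ) (hx : 0 < x) :
    Summable (fun m : ℕ =>
      ((m : ℝ) + 1) ^ d * x ^ (m + 1) * ((m : ℝ) + 1) ^ (-(κ * ((m : ℝ) + 1)))) ∧
    (∑' m : ℕ, ((m : ℝ) + 1) ^ d * x ^ (m + 1) * ((m : ℝ) + 1) ^ (-(κ * ((m : ℝ) + 1)))) ≤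
      6 * (max x ((((d : ℝ) + 4 / 3) / κ) ^ κ)) ^ (((d : ℝ) + 1) / κ) *
        Real.exp (κ * (max x ((((d : ℝ) + 4 / 3) / κ) ^ κ)) ^ (1 / κ)) := by
  set b : ℝ := ((d : ℝ) + 4/3)/κ with hb_def
  have hb : 0 < b := by positivity
  set x₀ : ℝ := b ^ κ with hx₀_def
  have hx₀ : 0 < x₀ := Real.rpow_pos_of_pos hb κ
  set X : ℝ := max x x₀ with hX_def
  have hX : 0 < X := lt_of_lt_of_le hx (le_max_left _ _)
  set y : ℝ := X ^ (1/κ) with hy_def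
  have hy : 0 < y := Real.rpow_pos_of_pos hX _
  have hyκ : y ^ κ = X := by
    rw [hy_def, ← Real.rpow_mul hX.le, one_div, inv_mul_cancel₀ hκ.ne', Real.rpow_one]
  have hyb : b ≤ y := by
    have h1 : x₀ ^ (1/κ) = b := by
      rw [hx₀_def, ← Real.rpow_mul hb.le, mul_one_div, div_self hκ.ne', Real.rpow_one]
    rw [← h1, hy_def]
    exact Real.rpow_le_rpow hx₀.le (le_max_right _ _) (by positivity)
  set C : ℝ := (d.factorial : ℝ) * (2/κ)^d * Real.exp (κ * y) with hC_def
  set r : ℝ := Real.exp (-(κ/2)) with hr_def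
  have hr0 : 0 < r := Real.exp_pos _
  have hr1 : r < 1 := Real.exp_lt_one_iff.mpr (by linarith)
  -- per-term bound
  have hterm : ∀ m : ℕ, ((m : ℝ) + 1) ^ d * x ^ (m + 1) * ((m : ℝ) + 1) ^ (-(κ * ((m : ℝ) + 1)))
      ≤ C * r ^ (m+1) := by
    intro m
    set n : ℝ := (m : ℝ) + 1 with hn_def
    have hn : 0 < n := by positivity
    have hncast : n = ((m+1 : ℕ) : ℝ) := by push_cast; ring
    have hA : x ^ (m+1) ≤ X ^ (m+1) := pow_le_pow_left₀ hx.le (le_max_left _ _) _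
    have hB : X ^ (m+1) = Real.exp (κ * n * Real.log y) := by
      rw [← hyκ, ← Real.rpow_natCast (y ^ κ) (m+1), ← Real.rpow_mul hy.le,
        Real.rpow_def_of_pos hy]
      congr 1
      rw [hncast]
      ring
    have hC2 : n ^ (-(κ * n)) = Real.exp (-(κ * n) * Real.log n) := by
      rw [Real.rpow_def_of_pos hn]; congr 1; ring
    have hlog : n * Real.log (y / n) ≤ y - n := by
      have h := Real.log_le_sub_one_of_pos (div_pos hy hn)
      have := mul_le_mul_of_nonneg_left h hn.le
      rw [mul_sub, mul_one, mul_div_cancel₀ _ hn.ne'] at this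
      linarith
    have hexp1 : Real.exp (κ * n * Real.log y + -(κ * n) * Real.log n)
        ≤ Real.exp (κ * y - κ * n) := by
      apply Real.exp_le_exp.mpr
      have : κ * n * Real.log y + -(κ * n) * Real.log n = κ * (n * Real.log (y/n)) := by
        rw [Real.log_div hy.ne' hn.ne']
        ring
      rw [this]
      calc κ * (n * Real.log (y/n)) ≤ κ * (y - n) := by
            exact mul_le_mul_of_nonneg_left hlog hκ.le
        _ = κ * y - κ * n := by ring
    have hnd : n ^ d ≤ (d.factorial : ℝ) * (2/κ)^d * Real.exp (κ * n / 2) := by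
      have h := Real.pow_div_factorial_le_exp (x := κ * n / 2) (by positivity) d
      have h2 : (κ * n / 2) ^ d ≤ (d.factorial : ℝ) * Real.exp (κ * n / 2) := by
        rw [div_le_iff₀ (by positivity : (0:ℝ) < (d.factorial : ℝ))] at h
        linarith [h]
      have h3 : n ^ d = (2/κ)^d * (κ * n / 2) ^ d := by
        rw [← mul_pow]
        congr 1
        field_simp
      rw [h3]
      calc (2/κ)^d * (κ * n / 2) ^ d
          ≤ (2/κ)^d * ((d.factorial : ℝ) * Real.exp (κ * n / 2)) := by
            exact mul_le_mul_of_nonneg_left h2 (by positivity)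
        _ = (d.factorial : ℝ) * (2/κ)^d * Real.exp (κ * n / 2) := by ring
    calc n ^ d * x ^ (m+1) * n ^ (-(κ * n))
        ≤ n ^ d * X ^ (m+1) * n ^ (-(κ * n)) := by
          apply mul_le_mul_of_nonneg_right _ (Real.rpow_nonneg hn.le _)
          exact mul_le_mul_of_nonneg_left hA (pow_nonneg hn.le _)
      _ = n ^ d * Real.exp (κ * n * Real.log y + -(κ * n) * Real.log n) := by
          rw [hB, hC2, mul_assoc, ← Real.exp_add]
      _ ≤ n ^ d * Real.exp (κ * y - κ * n) := by
          exact mul_le_mul_of_nonneg_left hexp1 (pow_nonneg hn.le _)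
      _ ≤ ((d.factorial : ℝ) * (2/κ)^d * Real.exp (κ * n / 2)) * Real.exp (κ * y - κ * n) := by
          exact mul_le_mul_of_nonneg_right hnd (Real.exp_pos _).le
      _ = C * r ^ (m+1) := by
          rw [hC_def]
          rw [show ((d.factorial : ℝ) * (2/κ)^d * Real.exp (κ * n / 2)) * Real.exp (κ * y - κ * n)
            = (d.factorial : ℝ) * (2/κ)^d * (Real.exp (κ * n / 2) * Real.exp (κ * y - κ * n)) from by ring]
          rw [show (d.factorial : ℝ) * (2/κ)^d * Real.exp (κ * y) * r ^ (m+1)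
            = (d.factorial : ℝ) * (2/κ)^d * (Real.exp (κ * y) * r ^ (m+1)) from by ring]
          congr 1
          rw [← Real.exp_add, hr_def, ← Real.exp_nat_mul, ← Real.exp_add]
          congr 1
          rw [hncast]
          push_cast
          ring
  have hpos : ∀ m : ℕ, 0 ≤ ((m : ℝ) + 1) ^ d * x ^ (m + 1) * ((m : ℝ) + 1) ^ (-(κ * ((m : ℝ) + 1))) := by
    intro m
    have hn : (0:ℝ) < (m:ℝ) + 1 := by positivity
    exact mul_nonneg (mul_nonneg (pow_nonneg hn.le _) (pow_nonneg hx.le _))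
      (Real.rpow_nonneg hn.le _)
  have hgeo : Summable (fun m : ℕ => C * r ^ (m+1)) := by
    have h := (summable_geometric_of_lt_one hr0.le hr1).mul_left (C * r)
    refine h.congr fun m => ?_
    rw [pow_succ]
    ring
  have hsum : Summable (fun m : ℕ =>
      ((m : ℝ) + 1) ^ d * x ^ (m + 1) * ((m : ℝ) + 1) ^ (-(κ * ((m : ℝ) + 1)))) :=
    Summable.of_nonneg_of_le hpos hterm hgeo
  refine ⟨hsum, ?_⟩
  have ht1 : (∑' m : ℕ, ((m : ℝ) + 1) ^ d * x ^ (m + 1) * ((m : ℝ) + 1) ^ (-(κ * ((m : ℝ) + 1))))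
      ≤ ∑' m : ℕ, C * r ^ (m+1) := Summable.tsum_le_tsum hterm hsum hgeo
  have ht2 : (∑' m : ℕ, C * r ^ (m+1)) = C * r * (1 - r)⁻¹ := by
    have h1 : (∑' m : ℕ, C * r ^ (m+1)) = ∑' m : ℕ, (C * r) * r ^ m := by
      congr 1
      funext m
      rw [pow_succ]
      ring
    rw [h1, tsum_mul_left, tsum_geometric_of_lt_one hr0.le hr1]
  have hC0 : (0:ℝ) ≤ C := by positivity
  have hrr : r * (1 - r)⁻¹ ≤ 2/κ := by
    have hexp : κ/2 + 1 ≤ Real.exp (κ/2) := by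
      have := Real.add_one_le_exp (κ/2)
      linarith
    have hrle : r ≤ (κ/2 + 1)⁻¹ := by
      rw [hr_def, Real.exp_neg]
      exact inv_anti₀ (by linarith) hexp
    have hrle2 : r * (κ/2 + 1) ≤ 1 := by
      calc r * (κ/2 + 1) ≤ (κ/2 + 1)⁻¹ * (κ/2 + 1) :=
            mul_le_mul_of_nonneg_right hrle (by linarith)
        _ = 1 := inv_mul_cancel₀ (by linarith)
    rw [← div_eq_mul_inv, div_le_div_iff₀ (by linarith) hκ]
    nlinarith
  have hkey : C * (2/κ) ≤ 6 * y^(d+1) * Real.exp (κ * y) := by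
    have h1 : (d.factorial : ℝ) * (2/κ)^(d+1) ≤ 6 * b^(d+1) := by
      have h2 := key14 d
      have h3 : (2/κ)^(d+1) = 2^(d+1) / κ^(d+1) := div_pow 2 κ (d+1)
      have h4 : b^(d+1) = ((d:ℝ) + 4/3)^(d+1) / κ^(d+1) := div_pow _ κ (d+1)
      rw [h3, h4,
        show (d.factorial:ℝ) * (2^(d+1)/κ^(d+1)) = (2^(d+1)*(d.factorial:ℝ))/κ^(d+1) from by ring,
        show (6:ℝ) * (((d:ℝ)+4/3)^(d+1)/κ^(d+1)) = (6*((d:ℝ)+4/3)^(d+1))/κ^(d+1) from by ring]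
      gcongr
    have h5 : b^(d+1) ≤ y^(d+1) := pow_le_pow_left₀ hb.le hyb _
    calc C * (2/κ) = (d.factorial : ℝ) * (2/κ)^(d+1) * Real.exp (κ * y) := by
          rw [hC_def, pow_succ]
          ring
      _ ≤ 6 * b^(d+1) * Real.exp (κ * y) :=
          mul_le_mul_of_nonneg_right h1 (Real.exp_pos _).le
      _ ≤ 6 * y^(d+1) * Real.exp (κ * y) := by
          refine mul_le_mul_of_nonneg_right ?_ (Real.exp_pos _).le
          linarith
  have hXpow : X ^ (((d:ℝ)+1)/κ) = y^(d+1) := by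
    rw [show ((d:ℝ)+1)/κ = (1/κ) * ((d+1 : ℕ):ℝ) by push_cast; ring,
      Real.rpow_mul hX.le, ← hy_def, Real.rpow_natCast]
  rw [hXpow]
  calc (∑' m : ℕ, ((m : ℝ) + 1) ^ d * x ^ (m + 1) * ((m : ℝ) + 1) ^ (-(κ * ((m : ℝ) + 1))))
      ≤ C * r * (1 - r)⁻¹ := by rw [← ht2]; exact ht1
    _ = C * (r * (1 - r)⁻¹) := by ring
    _ ≤ C * (2/κ) := mul_le_mul_of_nonneg_left hrr hC0
    _ ≤ 6 * y^(d+1) * Real.exp (κ * y) := hkey
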